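/- Let a be a non-periodic recurrent point of the one-sided shift σ on Σ^N. Then Σ(a), the closure of the orbit of a, is a nonempty compact, perfect, totally disconnected metric space (hence homeomorphic to the Cantor set). -/

import Mathlib

open Filter Topology Set

/-- The one-sided shift map on sequences. -/
def shift {X : Type*} (x : ℕ → X) : ℕ → X := fun i => x (i + 1)

/-- The discrete metric on a type. -/
noncomputable def discMetric {X : Type*} [DecidableEq X] (m n : X) : ℝ :=
  if m = n then 0 else 1

/-- The metric on the sequence space over a discrete alphabet:
`ρ(x,y) = Σ_i 2^{-i} d(x_i,y_i)/(1+d(x_i,y_i))` with `d` the discrete metric. -/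
noncomputable def rho {X : Type*} [DecidableEq X] (x y : ℕ → X) : ℝ :=
  ∑' i : ℕ, (1 / 2 : ℝ) ^ i * (discMetric (x i) (y i) / (1 + discMetric (x i) (y i)))

/-- A point is recurrent for `F` if every neighbourhood contains some forward iterate. -/
def IsRecurrentPt {M : Type*} [TopologicalSpace M] (F : M → M) (x : M) : Prop :=
  ∀ U ∈ nhds x, ∃ n > 0, F^[n] x ∈ U

/-- A point is periodic for `F` if `F^[n] x = x` for some `n > 0`. -/
def IsPeriodicPoint {M : Type*} (F : M → M) (x : M) : Prop :=
  ∃ n > 0, F^[n] x = x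

/-- A point is nonwandering for `F` if for every neighbourhood `U` there is `n > 0`
with `F^[n] '' U ∩ U` nonempty. -/
def IsNonwanderingPt {M : Type*} [TopologicalSpace M] (F : M → M) (x : M) : Prop :=
  ∀ U ∈ nhds x, ∃ n > 0, (F^[n] '' U ∩ U).Nonempty

set_option linter.unusedSectionVars false
set_option linter.unusedVariables false
namespace OCCantor

open Metric

variable {α : Type*} [MetricSpace α] [CompactSpace α] [TotallyDisconnectedSpace α] [Nonempty α]

/-- Union of a list of sets. -/
def LU : List (Set α) → Set α
  | [] => ∅
  | V :: r => V ∪ LU r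

lemma mem_LU {q : List (Set α)} {y : α} : y ∈ LU q ↔ ∃ D ∈ q, y ∈ D := by
  induction q with
  | nil => simp [LU]
  | cons V r ih => simp [LU, ih, or_and_right, exists_or]

lemma LU_subset {q : List (Set α)} {C : Set α} (h : ∀ D ∈ q, D ⊆ C) : LU q ⊆ C := by
  intro y hy
  obtain ⟨D, hD, hyD⟩ := mem_LU.1 hy
  exact h D hD hyD

lemma subset_LU {q : List (Set α)} {D : Set α} (h : D ∈ q) : D ⊆ LU q :=
  fun y hy => mem_LU.2 ⟨D, h, hy⟩

lemma isClosed_LU {q : List (Set α)} (h : ∀ D ∈ q, IsClosed D) : IsClosed (LU q) := by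
  induction q with
  | nil => simp [LU]
  | cons V r ih =>
    exact (h V (by simp)).union (ih fun D hD => h D (List.mem_cons_of_mem _ hD))

lemma disjoint_LU {q : List (Set α)} {C : Set α} (h : ∀ D ∈ q, Disjoint C D) :
    Disjoint C (LU q) := by
  induction q with
  | nil => simp [LU]
  | cons V r ih =>
    rw [LU, disjoint_union_right]
    exact ⟨h V (by simp), ih fun D hD => h D (List.mem_cons_of_mem _ hD)⟩

/-- Disjointify a list of sets, preserving the union. -/
def disjointify : List (Set α) → List (Set α)
  | [] => []
  | V :: r => V :: (disjointify r).map (· \ V)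

lemma LU_map_diff {q : List (Set α)} {V : Set α} : LU (q.map (· \ V)) = LU q \ V := by
  induction q with
  | nil => simp [LU]
  | cons W r ih => simp [LU, ih, union_diff_distrib]

lemma LU_disjointify {q : List (Set α)} : LU (disjointify q) = LU q := by
  induction q with
  | nil => rfl
  | cons V r ih =>
    simp only [disjointify, LU, LU_map_diff, ih, union_diff_self]

lemma disjointify_mem {q : List (Set α)} {D : Set α} (h : D ∈ disjointify q) :
    (∀ V ∈ q, IsClopen V) → IsClopen D ∧ ∃ V ∈ q, D ⊆ V := by
  induction q generalizing D with
  | nil => simp [disjointify] at h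
  | cons V r ih =>
    intro hcl
    simp only [disjointify, List.mem_cons, List.mem_map] at h
    rcases h with h | ⟨E, hE, rfl⟩
    · subst h
      exact ⟨hcl _ (by simp), _, by simp, subset_rfl⟩
    · obtain ⟨hEcl, W, hW, hEW⟩ := ih hE (fun V hV => hcl _ (List.mem_cons_of_mem _ hV))
      exact ⟨hEcl.diff (hcl _ (by simp)), W, List.mem_cons_of_mem _ hW,
        (diff_subset).trans hEW⟩

lemma disjointify_pairwise {q : List (Set α)} : (disjointify q).Pairwise Disjoint := by
  induction q with
  | nil => simp [disjointify]
  | cons V r ih =>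
    rw [disjointify, List.pairwise_cons]
    constructor
    · intro D hD
      obtain ⟨E, _, rfl⟩ := List.mem_map.1 hD
      exact disjoint_sdiff_self_right
    · exact List.Pairwise.map _ (fun D E h => h.mono diff_subset diff_subset) ih


/-- Split a nonempty clopen set into two disjoint nonempty clopen pieces. -/
lemma split2 (hiso : ∀ x : α, (𝓝[≠] x).NeBot) {C : Set α} (hC : IsClopen C)
    (hne : C.Nonempty) :
    ∃ C₀ C₁ : Set α, IsClopen C₀ ∧ IsClopen C₁ ∧ C₀.Nonempty ∧ C₁.Nonempty ∧
      Disjoint C₀ C₁ ∧ C₀ ∪ C₁ = C := by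
  obtain ⟨x, hx⟩ := hne
  have hcl : x ∈ closure ({x}ᶜ : Set α) :=
    mem_closure_iff_nhdsWithin_neBot.2 (hiso x)
  obtain ⟨y, hyC, hyx⟩ := mem_closure_iff.1 hcl C hC.isOpen hx
  obtain ⟨V, hV, hxV, hVsub⟩ := compact_exists_isClopen_in_isOpen
    (hC.isOpen.inter isOpen_compl_singleton) (⟨hx, fun (h : x ∈ ({y} : Set α)) => hyx (by simp_all)⟩ : x ∈ C ∩ {y}ᶜ)
  refine ⟨V, C \ V, hV, hC.diff hV, ⟨x, hxV⟩, ⟨y, hyC, fun hyV => (hVsub hyV).2 rfl⟩,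
    disjoint_sdiff_self_right, ?_⟩
  rw [union_diff_self, union_eq_self_of_subset_left (fun z hz => (hVsub hz).1)]

/-- Partition a nonempty clopen set into at least two nonempty clopen pieces of
diameter at most `ε`. -/
lemma smallPartition (hiso : ∀ x : α, (𝓝[≠] x).NeBot) {C : Set α} (hC : IsClopen C)
    (hne : C.Nonempty) {ε : ℝ} (hε : 0 < ε) :
    ∃ q : List (Set α), 2 ≤ q.length ∧ (∀ D ∈ q, IsClopen D ∧ D.Nonempty ∧ diam D ≤ ε) ∧
      q.Pairwise Disjoint ∧ LU q = C := by
  classical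
  have key : ∀ x : α, x ∈ C → ∃ V, IsClopen V ∧ x ∈ V ∧ V ⊆ ball x (ε/2) ∩ C := fun x hx =>
    compact_exists_isClopen_in_isOpen (isOpen_ball.inter hC.isOpen)
      ⟨mem_ball_self (half_pos hε), hx⟩
  choose! V hV1 hV2 hV3 using key
  obtain ⟨t, htC, hcover⟩ := hC.isClosed.isCompact.elim_nhds_subcover V
    (fun x hx => (hV1 x hx).isOpen.mem_nhds (hV2 x hx))
  set l : List (Set α) := t.toList.map V with hl
  have hlmem : ∀ D ∈ l, ∃ x ∈ C, D = V x := by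
    intro D hD
    obtain ⟨x, hx, rfl⟩ := List.mem_map.1 hD
    exact ⟨x, htC x (Finset.mem_toList.1 hx), rfl⟩
  have hLUl : LU l = C := by
    apply subset_antisymm
    · apply LU_subset
      intro D hD
      obtain ⟨x, hx, rfl⟩ := hlmem D hD
      exact (hV3 x hx).trans inter_subset_right
    · intro y hy
      obtain ⟨x, hxt, hyx⟩ := Set.mem_iUnion₂.1 (hcover hy)
      exact mem_LU.2 ⟨V x, List.mem_map.2 ⟨x, Finset.mem_toList.2 hxt, rfl⟩, hyx⟩
  -- properties of pieces of `disjointify l`, filtered to nonempty ones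
  have hdprop : ∀ D ∈ disjointify l, IsClopen D ∧ D ⊆ C ∧ diam D ≤ ε := by
    intro D hD
    have hclo : ∀ W ∈ l, IsClopen W := by
      intro W hW; obtain ⟨x, hx, rfl⟩ := hlmem W hW; exact hV1 x hx
    obtain ⟨hDcl, W, hWl, hDW⟩ := disjointify_mem hD hclo
    obtain ⟨x, hx, rfl⟩ := hlmem W hWl
    have hsub : D ⊆ ball x (ε/2) := hDW.trans ((hV3 x hx).trans inter_subset_left)
    refine ⟨hDcl, hDW.trans ((hV3 x hx).trans inter_subset_right), ?_⟩
    calc diam D ≤ diam (ball x (ε/2)) := diam_mono hsub isBounded_ball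
    _ ≤ 2 * (ε/2) := diam_ball (by linarith)
    _ = ε := by ring
  set q : List (Set α) := (disjointify l).filter (fun D => decide D.Nonempty) with hq
  have hqsub : ∀ D ∈ q, D ∈ disjointify l := fun D hD => (List.mem_filter.1 hD).1
  have hqne : ∀ D ∈ q, D.Nonempty := fun D hD =>
    of_decide_eq_true (List.mem_filter.1 hD).2
  have hqLU : LU q = C := by
    rw [← hLUl, ← LU_disjointify (q := l)]
    apply subset_antisymm
    · exact LU_subset fun D hD => subset_LU (hqsub D hD)
    · intro y hy
      obtain ⟨D, hD, hyD⟩ := mem_LU.1 hy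
      exact mem_LU.2 ⟨D, List.mem_filter.2 ⟨hD, decide_eq_true ⟨y, hyD⟩⟩, hyD⟩
  have hqpair : q.Pairwise Disjoint :=
    (disjointify_pairwise).sublist List.filter_sublist
  have hqprop : ∀ D ∈ q, IsClopen D ∧ D.Nonempty ∧ diam D ≤ ε := fun D hD =>
    ⟨(hdprop D (hqsub D hD)).1, hqne D hD, (hdprop D (hqsub D hD)).2.2⟩
  clear_value q
  rcases q with - | ⟨D, - | ⟨E, r⟩⟩
  · exact absurd ((show LU ([] : List (Set α)) = C from hqLU).symm.trans rfl)
      (Set.nonempty_iff_ne_empty.1 hne)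
  ·
    have hDC : D = C := by simpa [LU] using hqLU
    have hdiamC : diam C ≤ ε := hDC ▸ (hqprop D (by simp)).2.2
    obtain ⟨C₀, C₁, h₀, h₁, hne₀, hne₁, hdis, huni⟩ := split2 hiso hC hne
    have hbC : Bornology.IsBounded C := hC.isClosed.isCompact.isBounded
    refine ⟨[C₀, C₁], by simp, ?_, ?_, ?_⟩
    · rintro D' hD'
      simp only [List.mem_cons, List.not_mem_nil, or_false] at hD'
      rcases hD' with rfl | rfl
      · exact ⟨h₀, hne₀, (diam_mono (huni ▸ subset_union_left) hbC).trans hdiamC⟩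
      · exact ⟨h₁, hne₁, (diam_mono (huni ▸ subset_union_right) hbC).trans hdiamC⟩
    · simp [hdis]
    · simp [LU, huni]
  · exact ⟨D :: E :: r, by simp, hqprop, hqpair, hqLU⟩


variable (hiso : ∀ x : α, (𝓝[≠] x).NeBot)

/-- Choice of a small partition (with junk value when hypotheses fail). -/
noncomputable def part (C : Set α) (ε : ℝ) : List (Set α) := by
  classical
  exact if h : IsClopen C ∧ C.Nonempty ∧ 0 < ε then
    (smallPartition hiso h.1 h.2.1 h.2.2).choose else [C, C]

lemma part_spec {C : Set α} {ε : ℝ} (hC : IsClopen C) (hne : C.Nonempty) (hε : 0 < ε) :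
    2 ≤ (part hiso C ε).length ∧
      (∀ D ∈ part hiso C ε, IsClopen D ∧ D.Nonempty ∧ diam D ≤ ε) ∧
      (part hiso C ε).Pairwise Disjoint ∧ LU (part hiso C ε) = C := by
  rw [part, dif_pos ⟨hC, hne, hε⟩]
  exact (smallPartition hiso hC hne hε).choose_spec

/-- One step of the refinement process: repartition when the queue is a singleton. -/
noncomputable def step (q : List (Set α)) (d : ℕ) : List (Set α) :=
  if q.length ≤ 1 then part hiso q.headI ((1/2 : ℝ) ^ (d + 1)) else q

/-- Queue invariant. -/
def Inv (q : List (Set α)) : Prop :=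
  q ≠ [] ∧ (∀ D ∈ q, IsClopen D ∧ D.Nonempty) ∧ q.Pairwise Disjoint

lemma step_spec {q : List (Set α)} (d : ℕ) (hq : Inv q) :
    2 ≤ (step hiso q d).length ∧
      (∀ D ∈ step hiso q d, IsClopen D ∧ D.Nonempty) ∧
      (step hiso q d).Pairwise Disjoint ∧ LU (step hiso q d) = LU q ∧
      (q.length ≤ 1 → ∀ D ∈ step hiso q d, diam D ≤ (1/2 : ℝ) ^ (d + 1)) ∧
      (¬ q.length ≤ 1 → step hiso q d = q) := by
  obtain ⟨hne, hprop, hpair⟩ := hq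
  rw [step]
  by_cases h : q.length ≤ 1
  · rw [if_pos h]
    obtain ⟨D, rfl⟩ : ∃ D, q = [D] := by
      rcases q with - | ⟨D, - | ⟨E, r⟩⟩
      · exact absurd rfl hne
      · exact ⟨D, rfl⟩
      · simp at h
    have hD := hprop D (by simp)
    have hε : (0:ℝ) < (1/2 : ℝ) ^ (d + 1) := by positivity
    have hspec := part_spec hiso (C := D) hD.1 hD.2 hε
    simp only [List.headI]
    refine ⟨hspec.1, fun E hE => ⟨(hspec.2.1 E hE).1, (hspec.2.1 E hE).2.1⟩, hspec.2.2.1, ?_,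
      fun _ E hE => (hspec.2.1 E hE).2.2, fun hc => absurd h hc⟩
    rw [hspec.2.2.2]
    simp [LU]
  · rw [if_neg h]
    refine ⟨by omega, hprop, hpair, rfl, fun hc => absurd hc h, fun _ => rfl⟩

/-- The queue attached to each node of the binary tree. -/
noncomputable def nodeQ : List Bool → List (Set α)
  | [] => [Set.univ]
  | b :: l =>
    if b then (step hiso (nodeQ l) l.length).tail
    else [(step hiso (nodeQ l) l.length).headI]

lemma two_le_cons {β : Type*} {q : List β} (h : 2 ≤ q.length) : ∃ E F r, q = E :: F :: r := by
  rcases q with - | ⟨E, - | ⟨F, r⟩⟩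
  · simp at h
  · simp at h
  · exact ⟨E, F, r, rfl⟩

lemma nodeQ_false (l : List Bool) {E F : Set α} {r : List (Set α)}
    (hs : step hiso (nodeQ hiso l) l.length = E :: F :: r) :
    nodeQ hiso (false :: l) = [E] := by
  simp [nodeQ, hs]

lemma nodeQ_true (l : List Bool) {E F : Set α} {r : List (Set α)}
    (hs : step hiso (nodeQ hiso l) l.length = E :: F :: r) :
    nodeQ hiso (true :: l) = F :: r := by
  simp [nodeQ, hs]

lemma inv_nodeQ : ∀ l : List Bool, Inv (nodeQ hiso l) := by
  intro l
  induction l with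
  | nil =>
    refine ⟨by simp [nodeQ], ?_, by simp [nodeQ]⟩
    intro D hD
    simp only [nodeQ, List.mem_singleton] at hD
    subst hD
    exact ⟨isClopen_univ, univ_nonempty⟩
  | cons b l ih =>
    obtain ⟨hlen2, hprop, hpair, hLU, hdiam, hsame⟩ := step_spec hiso l.length ih
    obtain ⟨E, F, r, hs⟩ := two_le_cons hlen2
    rw [hs] at hprop hpair
    cases b
    · rw [nodeQ_false hiso l hs]
      refine ⟨by simp, ?_, by simp⟩
      intro D hD
      simp only [List.mem_singleton] at hD
      exact hD ▸ hprop E (by simp)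
    · rw [nodeQ_true hiso l hs]
      exact ⟨by simp, fun D hD => hprop D (List.mem_cons_of_mem _ hD),
        (List.pairwise_cons.1 hpair).2⟩

/-- Every member of a child queue is a member of the step of the parent queue. -/
lemma child_mem {l : List Bool} {b : Bool} {D : Set α} (hD : D ∈ nodeQ hiso (b :: l)) :
    D ∈ step hiso (nodeQ hiso l) l.length := by
  obtain ⟨E, F, r, hs⟩ := two_le_cons (step_spec hiso l.length (inv_nodeQ hiso l)).1
  rw [hs]
  cases b
  · rw [nodeQ_false hiso l hs] at hD
    simp only [List.mem_singleton] at hD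
    subst hD
    simp
  · rw [nodeQ_true hiso l hs] at hD
    exact List.mem_cons_of_mem _ hD

/-- The set attached to each node. -/
noncomputable def nodeS (l : List Bool) : Set α := LU (nodeQ hiso l)

lemma nodeS_nil : nodeS hiso ([] : List Bool) = univ := by
  simp [nodeS, nodeQ, LU]

lemma nodeS_union (l : List Bool) :
    nodeS hiso (false :: l) ∪ nodeS hiso (true :: l) = nodeS hiso l ∧
    Disjoint (nodeS hiso (false :: l)) (nodeS hiso (true :: l)) := by
  obtain ⟨hlen2, hprop, hpair, hLU, hdiam, hsame⟩ :=
    step_spec hiso l.length (inv_nodeQ hiso l)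
  obtain ⟨E, F, r, hs⟩ := two_le_cons hlen2
  rw [hs] at hLU hpair
  have h0 : nodeS hiso (false :: l) = E := by
    rw [nodeS, nodeQ_false hiso l hs, LU, LU]
    simp
  have h1 : nodeS hiso (true :: l) = LU (F :: r) := by
    rw [nodeS, nodeQ_true hiso l hs]
  constructor
  · rw [h0, h1]
    exact hLU
  · rw [h0, h1]
    exact disjoint_LU (List.pairwise_cons.1 hpair).1

lemma nodeS_subset (l : List Bool) (b : Bool) : nodeS hiso (b :: l) ⊆ nodeS hiso l := by
  rcases (nodeS_union hiso l).1 with h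
  cases b
  · rw [← h]; exact subset_union_left
  · rw [← h]; exact subset_union_right

lemma nodeS_closed (l : List Bool) : IsClosed (nodeS hiso l) :=
  isClosed_LU fun D hD => ((inv_nodeQ hiso l).2.1 D hD).1.isClosed

lemma nodeS_nonempty (l : List Bool) : (nodeS hiso l).Nonempty := by
  obtain ⟨hne, hprop, -⟩ := inv_nodeQ hiso l
  rcases hq : nodeQ hiso l with - | ⟨D, r⟩
  · exact absurd hq hne
  · obtain ⟨y, hy⟩ := (hprop D (by rw [hq]; simp)).2
    exact ⟨y, subset_LU (q := nodeQ hiso l) (by rw [hq]; simp) hy⟩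


/-- Finite prefix of a binary sequence (most recent entry first). -/
def resB (x : ℕ → Bool) : ℕ → List Bool
  | 0 => []
  | n + 1 => x n :: resB x n

lemma resB_length (x : ℕ → Bool) (n : ℕ) : (resB x n).length = n := by
  induction n with
  | zero => rfl
  | succ n ih => simp [resB, ih]

lemma resB_eq_of_agree {x y : ℕ → Bool} {n : ℕ} (h : ∀ i < n, x i = y i) :
    resB x n = resB y n := by
  induction n with
  | zero => rfl
  | succ n ih =>
    rw [resB, resB, h n (by omega), ih fun i hi => h i (by omega)]

lemma exists_singleton_step : ∀ (k : ℕ) (x : ℕ → Bool) (m : ℕ),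
    (nodeQ hiso (resB x m)).length ≤ k + 1 →
    ∃ n, m ≤ n ∧ (nodeQ hiso (resB x n)).length = 1 := by
  intro k
  induction k with
  | zero =>
    intro x m hm
    have h1 : 1 ≤ (nodeQ hiso (resB x m)).length :=
      List.length_pos_iff.2 (inv_nodeQ hiso _).1
    exact ⟨m, le_rfl, by omega⟩
  | succ k ih =>
    intro x m hm
    by_cases h : (nodeQ hiso (resB x m)).length ≤ 1
    · have h1 : 1 ≤ (nodeQ hiso (resB x m)).length :=
        List.length_pos_iff.2 (inv_nodeQ hiso _).1
      exact ⟨m, le_rfl, by omega⟩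
    · obtain ⟨hlen2, hprop, hpair, hLU, hdiam, hsame⟩ :=
        step_spec hiso (resB x m).length (inv_nodeQ hiso (resB x m))
      obtain ⟨E, F, r, hs⟩ := two_le_cons hlen2
      rcases Bool.eq_false_or_eq_true (x m) with hxm | hxm
      · have hlen : (nodeQ hiso (resB x (m + 1))).length ≤ k + 1 := by
          rw [show resB x (m + 1) = x m :: resB x m from rfl, hxm, nodeQ_true hiso _ hs]
          have := hsame h
          rw [hs] at this
          have : (E :: F :: r).length = (nodeQ hiso (resB x m)).length := by rw [this]
          simp at this ⊢
          omega
        obtain ⟨n, hn, h1⟩ := ih x (m + 1) hlen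
        exact ⟨n, by omega, h1⟩
      · refine ⟨m + 1, by omega, ?_⟩
        rw [show resB x (m + 1) = x m :: resB x m from rfl, hxm, nodeQ_false hiso _ hs]
        rfl

lemma exists_singleton (x : ℕ → Bool) (m : ℕ) :
    ∃ n, m ≤ n ∧ (nodeQ hiso (resB x n)).length = 1 :=
  exists_singleton_step hiso ((nodeQ hiso (resB x m)).length) x m (by omega)

lemma diam_small : ∀ (k : ℕ) (x : ℕ → Bool) (n : ℕ),
    (nodeQ hiso (resB x n)).length = 1 →
    ∀ D ∈ nodeQ hiso (resB x (n + k + 1)), diam D ≤ (1/2 : ℝ) ^ (n + 1) := by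
  intro k
  induction k with
  | zero =>
    intro x n hn D hD
    rw [show n + 0 + 1 = n + 1 from rfl] at hD
    have hD' := child_mem hiso (l := resB x n) (b := x n) (D := D)
      (by rwa [show resB x (n + 1) = x n :: resB x n from rfl] at hD)
    have hdiam := (step_spec hiso (resB x n).length (inv_nodeQ hiso (resB x n))).2.2.2.2.1
    have := hdiam (by omega) D hD'
    rwa [resB_length] at this
  | succ k ih =>
    intro x n hn D hD
    have hD' := child_mem hiso (l := resB x (n + k + 1)) (b := x (n + k + 1)) (D := D)
      (by rwa [show resB x (n + (k+1) + 1) = x (n + k + 1) :: resB x (n + k + 1) from rfl] at hD)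
    obtain ⟨hlen2, hprop, hpair, hLU, hdiam, hsame⟩ :=
      step_spec hiso (resB x (n + k + 1)).length (inv_nodeQ hiso (resB x (n + k + 1)))
    by_cases h : (nodeQ hiso (resB x (n + k + 1))).length ≤ 1
    · have := hdiam h D hD'
      rw [resB_length] at this
      refine this.trans ?_
      apply pow_le_pow_of_le_one (by norm_num) (by norm_num)
      omega
    · rw [hsame h] at hD'
      exact ih x n hn D hD'

lemma nodeS_mono (x : ℕ → Bool) : ∀ n k : ℕ, k ≤ n →
    nodeS hiso (resB x n) ⊆ nodeS hiso (resB x k) := by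
  intro n
  induction n with
  | zero => intro k hk; rw [Nat.le_zero.1 hk]
  | succ n ih =>
    intro k hk
    rcases Nat.lt_or_ge k (n + 1) with h | h
    · exact (nodeS_subset hiso (resB x n) (x n)).trans (ih k (by omega))
    · rw [show k = n + 1 by omega]

lemma allBounded (s : Set α) : Bornology.IsBounded s :=
  (isCompact_univ.isBounded).subset (subset_univ s)

lemma vanishing (x : ℕ → Bool) {ε : ℝ} (hε : 0 < ε) :
    ∃ n₀, ∀ n, n₀ ≤ n → diam (nodeS hiso (resB x n)) ≤ ε := by
  obtain ⟨m, hm⟩ := exists_pow_lt_of_lt_one hε (by norm_num : (1/2 : ℝ) < 1)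
  obtain ⟨n, hn, hsing⟩ := exists_singleton hiso x m
  obtain ⟨n₂, hn₂, hsing₂⟩ := exists_singleton hiso x (n + 1)
  obtain ⟨D, hD⟩ : ∃ D, nodeQ hiso (resB x n₂) = [D] := List.length_eq_one_iff.1 hsing₂
  have hDdiam : diam D ≤ (1/2 : ℝ) ^ (n + 1) := by
    refine diam_small hiso (n₂ - n - 1) x n hsing D ?_
    rw [show n + (n₂ - n - 1) + 1 = n₂ by omega, hD]
    simp
  have hS : nodeS hiso (resB x n₂) = D := by
    rw [nodeS, hD, LU, LU]
    simp
  refine ⟨n₂, fun k hk => ?_⟩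
  have hsub : nodeS hiso (resB x k) ⊆ nodeS hiso (resB x n₂) := nodeS_mono hiso x k n₂ hk
  have hb : Bornology.IsBounded (nodeS hiso (resB x n₂)) := allBounded _
  refine (diam_mono hsub hb).trans ?_
  rw [hS]
  refine hDdiam.trans ?_
  have h2 : ((1:ℝ)/2) ^ (n + 1) ≤ (1/2 : ℝ) ^ m :=
    pow_le_pow_of_le_one (by norm_num) (by norm_num) (by omega)
  linarith

lemma iInter_nonempty (x : ℕ → Bool) : (⋂ n, nodeS hiso (resB x n)).Nonempty := by
  apply IsCompact.nonempty_iInter_of_sequence_nonempty_isCompact_isClosed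
    (fun n => nodeS hiso (resB x n))
  · intro i
    exact nodeS_subset hiso (resB x i) (x i)
  · intro i
    exact nodeS_nonempty hiso _
  · exact (nodeS_closed hiso _).isCompact
  · intro i
    exact nodeS_closed hiso _

/-- The limit map from Cantor space. -/
noncomputable def limitF (x : ℕ → Bool) : α := (iInter_nonempty hiso x).choose

lemma limitF_mem (x : ℕ → Bool) (n : ℕ) : limitF hiso x ∈ nodeS hiso (resB x n) := by
  have h := (iInter_nonempty hiso x).choose_spec
  rw [Set.mem_iInter] at h
  exact h n

lemma unique_pt {x : ℕ → Bool} {z w : α} (hz : ∀ n, z ∈ nodeS hiso (resB x n))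
    (hw : ∀ n, w ∈ nodeS hiso (resB x n)) : z = w := by
  by_contra hne
  have hd : 0 < dist z w := dist_pos.2 hne
  obtain ⟨n₀, hn₀⟩ := vanishing hiso x (half_pos hd)
  have := (dist_le_diam_of_mem (allBounded _) (hz n₀) (hw n₀)).trans (hn₀ n₀ le_rfl)
  linarith

lemma limitF_inj : Function.Injective (limitF hiso) := by
  intro x y hxy
  by_contra hne
  have hex : ∃ n, x n ≠ y n := by
    by_contra h
    push_neg at h
    exact hne (funext h)
  classical
  set n := Nat.find hex with hndef
  have hn : x n ≠ y n := Nat.find_spec hex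
  have hmin : ∀ i, i < n → x i = y i := fun i hi => not_not.1 (Nat.find_min hex hi)
  have hres : resB x n = resB y n := resB_eq_of_agree hmin
  have h1 : limitF hiso x ∈ nodeS hiso (x n :: resB x n) := limitF_mem hiso x (n + 1)
  have h2 : limitF hiso y ∈ nodeS hiso (y n :: resB x n) := by
    rw [hres]
    exact limitF_mem hiso y (n + 1)
  rw [hxy] at h1
  have hdisj := (nodeS_union hiso (resB x n)).2
  rcases Bool.eq_false_or_eq_true (x n) with hx1 | hx1 <;>
    rcases Bool.eq_false_or_eq_true (y n) with hy1 | hy1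
  · exact hn (hx1.trans hy1.symm)
  · exact Set.disjoint_left.1 hdisj (hy1 ▸ h2) (hx1 ▸ h1)
  · exact Set.disjoint_left.1 hdisj (hx1 ▸ h1) (hy1 ▸ h2)
  · exact hn (hx1.trans hy1.symm)

/-- A branch through the tree passing through a given point. -/
noncomputable def branchAux (y : α) : (n : ℕ) → { l : List Bool // l.length = n ∧ y ∈ nodeS hiso l }
  | 0 => ⟨[], rfl, by rw [nodeS_nil hiso]; trivial⟩
  | n + 1 =>
    let p := branchAux y n
    letI : Decidable (y ∈ nodeS hiso (false :: p.1)) :=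
      Classical.propDecidable _
    if h : y ∈ nodeS hiso (false :: p.1) then ⟨false :: p.1, by simp [p.2.1], h⟩
    else ⟨true :: p.1, by simp [p.2.1], by
      have hy := p.2.2
      rw [← (nodeS_union hiso p.1).1] at hy
      rcases hy with hy | hy
      · exact absurd hy h
      · exact hy⟩

lemma branchAux_succ (y : α) (n : ℕ) :
    ∃ b : Bool, (branchAux hiso y (n + 1)).1 = b :: (branchAux hiso y n).1 := by
  rw [branchAux]
  split
  · exact ⟨false, rfl⟩
  · exact ⟨true, rfl⟩

lemma limitF_surj : Function.Surjective (limitF hiso) := by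
  intro y
  let b : ℕ → Bool := fun n => ((branchAux hiso y (n + 1)).1).headI
  have hres : ∀ n, resB b n = (branchAux hiso y n).1 := by
    intro n
    induction n with
    | zero => rfl
    | succ n ih =>
      obtain ⟨bit, hbit⟩ := branchAux_succ hiso y n
      rw [show resB b (n + 1) = b n :: resB b n from rfl, ih, hbit]
      congr 1
      show ((branchAux hiso y (n + 1)).1).headI = bit
      rw [hbit]
      rfl
  have hy : ∀ n, y ∈ nodeS hiso (resB b n) := fun n => (hres n) ▸ (branchAux hiso y n).2.2
  exact ⟨b, unique_pt hiso (fun n => limitF_mem hiso b n) hy⟩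

lemma limitF_cont : Continuous (limitF hiso) := by
  rw [continuous_iff_continuousAt]
  intro x
  rw [ContinuousAt, Metric.tendsto_nhds]
  intro ε hε
  obtain ⟨n₀, hn₀⟩ := vanishing hiso x (half_pos hε)
  have hU : IsOpen {y : ℕ → Bool | ∀ i < n₀, y i = x i} := by
    have heq : {y : ℕ → Bool | ∀ i < n₀, y i = x i} =
        ⋂ i ∈ Finset.range n₀, {y : ℕ → Bool | y i = x i} := by
      ext y
      simp [Finset.mem_range]
    rw [heq]
    refine isOpen_biInter_finset fun i _ => ?_
    have hpre : {y : ℕ → Bool | y i = x i} = (fun y : ℕ → Bool => y i) ⁻¹' {x i} := rfl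
    rw [hpre]
    exact (isOpen_discrete _).preimage (continuous_apply i)
  refine eventually_of_mem (hU.mem_nhds (fun i _ => rfl)) ?_
  intro y hy
  have hres : resB y n₀ = resB x n₀ := resB_eq_of_agree fun i hi => hy i hi
  have h1 : limitF hiso y ∈ nodeS hiso (resB x n₀) := by
    rw [← hres]
    exact limitF_mem hiso y n₀
  have h2 := limitF_mem hiso x n₀
  have := (dist_le_diam_of_mem (allBounded _) h1 h2).trans (hn₀ n₀ le_rfl)
  linarith

theorem homeo_cantor_of_metric (hiso : ∀ x : α, (𝓝[≠] x).NeBot) :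
    Nonempty (α ≃ₜ (ℕ → Bool)) := by
  have hbij : Function.Bijective (limitF hiso) := ⟨limitF_inj hiso, limitF_surj hiso⟩
  exact ⟨(Continuous.homeoOfEquivCompactToT2 (f := Equiv.ofBijective _ hbij)
    (limitF_cont hiso)).symm⟩

end OCCantor

theorem homeo_cantor {β : Type*} [TopologicalSpace β] [TopologicalSpace.MetrizableSpace β]
    [CompactSpace β] [TotallyDisconnectedSpace β] [Nonempty β]
    (hiso : ∀ x : β, (𝓝[≠] x).NeBot) : Nonempty (β ≃ₜ (ℕ → Bool)) := by
  letI := TopologicalSpace.metrizableSpaceMetric β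
  exact OCCantor.homeo_cantor_of_metric hiso


section Dyn
variable {N : ℕ} (a : ℕ → Fin N)

lemma shift_cont {X : Type*} [TopologicalSpace X] : Continuous (shift (X := X)) :=
  continuous_pi fun i => continuous_apply (i + 1)

lemma recurrent_iterate (hrec : IsRecurrentPt shift a) (m : ℕ) :
    IsRecurrentPt shift (shift^[m] a) := by
  induction m with
  | zero => simpa using hrec
  | succ m ih =>
    intro U hU
    have hV : shift ⁻¹' U ∈ nhds (shift^[m] a) := by
      apply shift_cont.continuousAt.preimage_mem_nhds
      rwa [Function.iterate_succ_apply'] at hU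
    obtain ⟨n, hn, hmem⟩ := ih _ hV
    refine ⟨n, hn, ?_⟩
    have he : shift^[n] (shift^[m + 1] a) = shift (shift^[n] (shift^[m] a)) := by
      rw [← Function.iterate_add_apply]
      have : n + (m + 1) = (n + m) + 1 := by omega
      rw [this, Function.iterate_succ_apply', Function.iterate_add_apply]
    rw [he]
    exact hmem

lemma nonperiodic_iterate (hrec : IsRecurrentPt shift a) (hper : ¬ IsPeriodicPoint shift a)
    (m : ℕ) : ¬ IsPeriodicPoint shift (shift^[m] a) := by
  rintro ⟨k, hk, heq⟩
  rw [← Function.iterate_add_apply] at heq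
  -- heq : shift^[k + m] a = shift^[m] a
  set T : Set (ℕ → Fin N) := (fun i => shift^[i] a) '' (Set.Icc 1 (m + k)) with hT
  have hTfin : T.Finite := (Set.finite_Icc _ _).image _
  have key : ∀ n, 1 ≤ n → shift^[n] a ∈ T := by
    intro n
    induction n using Nat.strong_induction_on with
    | _ n ih =>
      intro hn
      by_cases h : n ≤ m + k
      · exact ⟨n, ⟨hn, h⟩, rfl⟩
      · push_neg at h
        have h2 : shift^[n] a = shift^[n - k] a := by
          have : n = (n - m - k) + (k + m) := by omega
          rw [this, Function.iterate_add_apply, heq, ← Function.iterate_add_apply]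
          congr 1
          omega
        rw [h2]
        exact ih (n - k) (by omega) (by omega)
  have haT : a ∈ T := by
    have hclosed : IsClosed T := hTfin.isClosed
    have : a ∈ closure T := by
      rw [mem_closure_iff_nhds]
      intro U hU
      obtain ⟨n, hn, hmem⟩ := hrec U hU
      exact ⟨shift^[n] a, hmem, key n hn⟩
    rwa [hclosed.closure_eq] at this
  obtain ⟨i, ⟨hi1, _⟩, hia⟩ := haT
  exact hper ⟨i, hi1, hia⟩

lemma acc_orbit (hrec : IsRecurrentPt shift a) (hper : ¬ IsPeriodicPoint shift a) (m : ℕ) :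
    AccPt (shift^[m] a) (𝓟 (Set.range fun n : ℕ => shift^[n] a)) := by
  rw [accPt_iff_nhds]
  intro U hU
  obtain ⟨n, hn, hmem⟩ := recurrent_iterate a hrec m U hU
  refine ⟨shift^[n] (shift^[m] a), ⟨hmem, ?_⟩, ?_⟩
  · rw [← Function.iterate_add_apply]; exact ⟨n + m, rfl⟩
  · intro h
    exact nonperiodic_iterate a hrec hper m ⟨n, hn, h⟩

lemma perfect_orbitClosure (hrec : IsRecurrentPt shift a) (hper : ¬ IsPeriodicPoint shift a) :
    Perfect (closure (Set.range fun n : ℕ => shift^[n] a)) := by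
  apply Preperfect.perfect_closure
  rintro x ⟨m, rfl⟩
  exact acc_orbit a hrec hper m

end Dyn

/-- The orbit closure of a non-periodic recurrent point of the shift on `Σ^N` is a
nonempty compact, perfect, totally disconnected space, homeomorphic to the Cantor set. -/
theorem orbitClosure_cantor {N : ℕ} (hN : 2 ≤ N) (a : ℕ → Fin N)
    (hrec : IsRecurrentPt shift a) (hper : ¬ IsPeriodicPoint shift a) :
    (closure (Set.range fun n : ℕ => shift^[n] a)).Nonempty ∧
    IsCompact (closure (Set.range fun n : ℕ => shift^[n] a)) ∧
    Perfect (closure (Set.range fun n : ℕ => shift^[n] a)) ∧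
    IsTotallyDisconnected (closure (Set.range fun n : ℕ => shift^[n] a)) ∧
    Nonempty ((closure (Set.range fun n : ℕ => shift^[n] a)) ≃ₜ (ℕ → Bool)) := by
  set K := closure (Set.range fun n : ℕ => shift^[n] a) with hK
  have hne : K.Nonempty := ⟨a, subset_closure ⟨0, by simp⟩⟩
  have hcpt : IsCompact K := isClosed_closure.isCompact
  have hperf : Perfect K := perfect_orbitClosure a hrec hper
  have htd : IsTotallyDisconnected K := isTotallyDisconnected_of_totallyDisconnectedSpace K
  refine ⟨hne, hcpt, hperf, htd, ?_⟩
  haveI : CompactSpace K := isCompact_iff_compactSpace.mp hcpt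
  haveI : Nonempty K := hne.to_subtype
  apply homeo_cantor
  intro p
  have hacc : AccPt (p : ℕ → Fin N) (𝓟 K) := hperf.acc _ p.2
  have h1 : (𝓝[K \ {(p : ℕ → Fin N)}] (p : ℕ → Fin N)).NeBot := by
    have hKd : K \ {(p : ℕ → Fin N)} = {(p : ℕ → Fin N)}ᶜ ∩ K := by
      rw [Set.diff_eq, Set.inter_comm]
    rw [hKd, nhdsWithin_inter']
    exact hacc
  have h2 : (p : ℕ → Fin N) ∈ closure (Subtype.val '' ({p}ᶜ : Set K)) := by
    have himg : Subtype.val '' ({p}ᶜ : Set K) = K \ {(p : ℕ → Fin N)} := by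
      ext y
      constructor
      · rintro ⟨q, hq, rfl⟩
        exact ⟨q.2, fun h => hq (Subtype.ext h)⟩
      · rintro ⟨hyK, hyp⟩
        exact ⟨⟨y, hyK⟩, fun h => hyp (congrArg Subtype.val h), rfl⟩
    rw [himg]
    exact mem_closure_iff_nhdsWithin_neBot.2 h1
  exact mem_closure_iff_nhdsWithin_neBot.1 (closure_subtype.2 h2)
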